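/- arXiv:1806.10424 — 2 statements merged into one kernel-verified Lean document; each statement's English description precedes it below -/
import Mathlib

section
/- Let n and α be positive integers with α < n and n ≥ 2α, and let the graph G' arise from F(n,α) by adding an edge uv between two non-adjacent vertices u and v of F(n,α). Then the independence number of G' equals α and ♯α(G') < f(n,α). -/
open Finset

/-- A finset of vertices is independent in `G`: pairwise non-adjacent. -/
def IsIndepFinset {V : Type*} (G : SimpleGraph V) (s : Finset V) : Prop :=
  ∀ ⦃u⦄, u ∈ s → ∀ ⦃v⦄, v ∈ s → u ≠ v → ¬ G.Adj u v

/-- The independence number of a finite graph. -/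
noncomputable def indepNumber {V : Type*} [Fintype V] (G : SimpleGraph V) : ℕ :=
  sSup {k | ∃ s : Finset V, IsIndepFinset G s ∧ s.card = k}

/-- The number `♯α(G)` of maximum independent sets of `G`. -/
noncomputable def numMaxIndep {V : Type*} [Fintype V] (G : SimpleGraph V) : ℕ :=
  Set.ncard {s : Finset V | IsIndepFinset G s ∧ s.card = indepNumber G}

/-- The number `♯α(G,u)` of maximum independent sets of `G` containing `u`. -/
noncomputable def numMaxIndepOn {V : Type*} [Fintype V] (G : SimpleGraph V) (u : V) : ℕ :=
  Set.ncard {s : Finset V | IsIndepFinset G s ∧ s.card = indepNumber G ∧ u ∈ s}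

/-- `g(n,α) = ⌊n/α⌋^(α − n mod α) ⌈n/α⌉^(n mod α)`. -/
def gFun (n a : ℕ) : ℕ := (n / a) ^ (a - n % a) * ((n + a - 1) / a) ^ (n % a)

/-- `t(n,α) = ∏_{i=1}^{α−1} (|C_i| − 1)`, where `|C_i| = ⌊n/α⌋ + 1` for `i < n mod α`
and `|C_i| = ⌊n/α⌋` otherwise. -/
def tFun (n a : ℕ) : ℕ := ∏ i ∈ Finset.Ico 1 a, (n / a + (if i < n % a then 1 else 0) - 1)

/-- `f(n,α) = g(n−1,α) + t(n,α)`. -/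
def fFun (n a : ℕ) : ℕ := gFun (n - 1) a + tFun n a

/-- `G(n,α)`: complement of the Turán graph, i.e. the disjoint union of `α` cliques
(the residue classes mod `α`), each of order `⌈n/α⌉` or `⌊n/α⌋`. -/
def Ggraph (n a : ℕ) : SimpleGraph (Fin n) where
  Adj v w := v ≠ w ∧ v.val % a = w.val % a
  symm := ⟨by intro v w h; exact ⟨h.1.symm, h.2.symm⟩⟩
  loopless := ⟨by intro v h; exact h.1 rfl⟩

/-- `F(n,α)`: `G(n,α)` plus the edges `x₀x₁, …, x₀x_{α−1}`, where `x_i` is the vertex `i`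
of the clique `C_i` (the residue class of `i` mod `α`); `x₀ = 0` is the special cutvertex,
lying in the clique `C₀` of order `⌈n/α⌉`. -/
def Fgraph (n a : ℕ) : SimpleGraph (Fin n) where
  Adj v w := v ≠ w ∧
    (v.val % a = w.val % a ∨ (v.val = 0 ∧ w.val < a) ∨ (w.val = 0 ∧ v.val < a))
  symm := ⟨by intro v w h; exact ⟨h.1.symm, by tauto⟩⟩
  loopless := ⟨by intro v h; exact h.1 rfl⟩


lemma card_filter_res {n a q r : ℕ} (ha : 0 < a) (hn : n = a*q + r) (hr : r < a)
    {i l : ℕ} (hi : i < a) (hl : l ≤ q) :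
    (Finset.univ.filter (fun x : Fin n => x.val % a = i ∧ a * l ≤ x.val)).card
      = (q + if i < r then 1 else 0) - l := by
  rw [← Finset.card_range ((q + if i < r then 1 else 0) - l)]
  have hbnd : ∀ k ∈ Finset.range ((q + if i < r then 1 else 0) - l), a*(k+l)+i < n := by
    intro k hk
    have hk' : k + l < q + if i < r then 1 else 0 := by
      rw [Finset.mem_range] at hk; omega
    by_cases hir : i < r
    · simp only [hir, if_pos] at hk'
      have h1 : k + l ≤ q := by omega
      have := Nat.mul_le_mul_left a h1
      omega
    · simp only [hir, if_neg, not_false_iff] at hk'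
      have h1 : k + l + 1 ≤ q := by omega
      have := Nat.mul_le_mul_left a h1
      have h2 : a*(k+l+1) = a*(k+l)+a := by ring
      omega
  have hdivfacts : ∀ x : Fin n, x.val % a = i → a * l ≤ x.val →
      l ≤ x.val / a ∧ x.val / a < (q + if i < r then 1 else 0) ∧
        a * (x.val / a) + x.val % a = x.val := by
    intro x hmod hle
    have hxd : a * (x.val / a) + x.val % a = x.val := Nat.div_add_mod _ _
    have hxn : x.val < n := x.isLt
    have hlx : l ≤ x.val / a := by
      by_contra hc
      push_neg at hc
      have h2 : x.val / a + 1 ≤ l := hc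
      have := Nat.mul_le_mul_left a h2
      have h3 : a * (x.val/a + 1) = a * (x.val/a) + a := by ring
      omega
    refine ⟨hlx, ?_, hxd⟩
    by_cases hir : i < r
    · simp only [hir, if_pos]
      by_contra hc
      push_neg at hc
      have := Nat.mul_le_mul_left a hc
      have h3 : a * (q+1) = a*q + a := by ring
      omega
    · simp only [hir, if_neg, not_false_iff, Nat.add_zero]
      by_contra hc
      push_neg at hc
      have := Nat.mul_le_mul_left a hc
      omega
  symm
  refine Finset.card_bij' (fun k hk => (⟨a*(k+l)+i, hbnd k hk⟩ : Fin n))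
      (fun x _ => x.val / a - l) ?_ ?_ ?_ ?_
  · intro k hk
    simp only [Finset.mem_filter, Finset.mem_univ, true_and]
    constructor
    · simp [Nat.mul_add_mod, Nat.mod_eq_of_lt hi]
    · have := Nat.mul_le_mul_left a (Nat.le_add_left l k)
      omega
  · intro x hx
    simp only [Finset.mem_filter, Finset.mem_univ, true_and] at hx
    obtain ⟨h1, h2, h3⟩ := hdivfacts x hx.1 hx.2
    rw [Finset.mem_range]
    by_cases hir : i < r <;> simp only [hir, if_pos, if_neg, not_false_iff] at h2 ⊢ <;> omega
  · intro k hk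
    simp only
    rw [Nat.mul_add_div ha, Nat.div_eq_of_lt hi]
    omega
  · intro x hx
    simp only [Finset.mem_filter, Finset.mem_univ, true_and] at hx
    obtain ⟨h1, h2, h3⟩ := hdivfacts x hx.1 hx.2
    apply Fin.ext
    simp only
    rw [Nat.sub_add_cancel h1]
    omega


lemma prod_ite_Ico {q r a : ℕ} (ha : 0 < a) (hr : r < a) :
    ∏ i ∈ Finset.Ico 1 a, (q + if i < r then 1 else 0)
      = (q+1)^(max 1 r - 1) * q^(a - max 1 r) := by
  rw [← Finset.prod_Ico_consecutive _ (le_max_left 1 r) (by omega : max 1 r ≤ a)]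
  congr 1
  · rw [Finset.prod_congr rfl (g := fun _ => q+1) (fun i hi => by
      rw [Finset.mem_Ico] at hi
      have : i < r := by omega
      simp [this]), Finset.prod_const, Nat.card_Ico]
  · rw [Finset.prod_congr rfl (g := fun _ => q) (fun i hi => by
      rw [Finset.mem_Ico] at hi
      have : ¬ i < r := by omega
      simp [this]), Finset.prod_const, Nat.card_Ico]

lemma gfun_eq {n a q r : ℕ} (ha : 0 < a) (hn : n = a*q + r) (hr : r < a) (hq : 2 ≤ q) :
    gFun (n-1) a
      = ((q + if 0 < r then 1 else 0) - 1) * ((q+1)^(max 1 r - 1) * q^(a - max 1 r)) := by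
  rcases Nat.eq_zero_or_pos r with hr0 | hr1
  · subst hr0
    simp only [lt_self_iff_false, if_false, Nat.add_zero, max_eq_left (by omega : (0:ℕ) ≤ 1),
      pow_zero, one_mul]
    rcases Nat.lt_or_ge a 2 with ha1 | ha2
    · -- a = 1
      have ha1' : a = 1 := by omega
      subst ha1'
      simp only [gFun, Nat.mod_one, Nat.div_one, pow_zero, mul_one, Nat.sub_zero, pow_one,
        Nat.sub_self]
      omega
    · -- a ≥ 2
      obtain ⟨q', rfl⟩ : ∃ q', q = q'+1 := ⟨q-1, by omega⟩
      have h1 : n - 1 = a*((q'+1)-1) + (a-1) := by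
        have h2 : a*(q'+1) = a*q' + a := by ring
        have h3 : (q'+1)-1 = q' := by omega
        rw [h3]
        omega
      have hdiv : (n-1)/a = (q'+1)-1 := by
        rw [h1, Nat.mul_add_div ha, Nat.div_eq_of_lt (by omega)]
        omega
      have hmod : (n-1) % a = a-1 := by
        rw [h1, Nat.mul_add_mod, Nat.mod_eq_of_lt (by omega)]
      have hceil : (n - 1 + a - 1)/a = q'+1 := by
        have h2 : n - 1 + a - 1 = a*(q'+1) + (a-2) := by
          have h3 : a*(q'+1) = a*q' + a := by ring
          omega
        rw [h2, Nat.mul_add_div ha, Nat.div_eq_of_lt (by omega)]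
      unfold gFun
      rw [hdiv, hmod, hceil]
      have h4 : a - (a-1) = 1 := by omega
      rw [h4, pow_one]
      norm_num
  · -- r ≥ 1
    have hmax : max 1 r = r := by omega
    rw [hmax]
    have h1 : n - 1 = a*q + (r-1) := by omega
    have hdiv : (n-1)/a = q := by
      rw [h1, Nat.mul_add_div ha, Nat.div_eq_of_lt (by omega)]
      omega
    have hmod : (n-1) % a = r-1 := by
      rw [h1, Nat.mul_add_mod, Nat.mod_eq_of_lt (by omega)]
    simp only [hr1, if_pos]
    unfold gFun
    rw [hdiv, hmod]
    rcases Nat.lt_or_ge r 2 with hr2 | hr2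
    · have hr1' : r = 1 := by omega
      subst hr1'
      simp only [Nat.sub_self, pow_zero, mul_one, Nat.add_sub_cancel]
      rw [show a - 0 = a by omega]
      conv_lhs => rw [show a = (a-1) + 1 by omega]
      rw [pow_succ]
      ring
    · have hceil : (n - 1 + a - 1)/a = q + 1 := by
        have h2 : n - 1 + a - 1 = a*(q+1) + (r-2) := by
          have : a*(q+1) = a*q + a := by ring
          omega
        rw [h2, Nat.mul_add_div ha, Nat.div_eq_of_lt (by omega)]
      rw [hceil]
      have he : a - (r-1) = (a - r) + 1 := by omega
      rw [he, pow_succ, Nat.add_sub_cancel]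
      ring

lemma countM {n a : ℕ} (ha0 : 0 < a) (h2a : 2*a ≤ n) :
    Set.ncard {s : Finset (Fin n) | IsIndepFinset (Fgraph n a) s ∧ s.card = a} ≤ fFun n a := by
  classical
  have hn : n = a*(n/a) + (n%a) := (Nat.div_add_mod n a).symm
  have hr : n % a < a := Nat.mod_lt _ ha0
  have hq2 : 2 ≤ n/a := by
    rw [Nat.le_div_iff_mul_le ha0]; omega
  set C0 : Set (Fin a → Fin n) := {c | ∀ i : Fin a,
    (c i).val % a = i.val ∧ (i.val = 0 → (c i).val = 0) ∧ (i.val ≠ 0 → a ≤ (c i).val)} with hC0def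
  set C1 : Set (Fin a → Fin n) := {c | ∀ i : Fin a,
    (c i).val % a = i.val ∧ (i.val = 0 → a ≤ (c i).val)} with hC1def
  set Ψ : (Fin a → Fin n) → Finset (Fin n) := fun c => Finset.image c Finset.univ with hΨdef
  -- Step 1: every maximum independent set is the image of a choice function
  have hsub : {s : Finset (Fin n) | IsIndepFinset (Fgraph n a) s ∧ s.card = a}
      ⊆ Ψ '' C0 ∪ Ψ '' C1 := by
    rintro s ⟨hind, hcard⟩
    have hadj : ∀ x ∈ s, ∀ y ∈ s, x ≠ y → x.val % a ≠ y.val % a := by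
      intro x hx y hy hne h
      exact hind hx hy hne ⟨hne, Or.inl h⟩
    have himg : s.image (fun x : Fin n => x.val % a) = Finset.range a := by
      apply Finset.eq_of_subset_of_card_le
      · intro j hj
        simp only [Finset.mem_image] at hj
        obtain ⟨x, _, rfl⟩ := hj
        exact Finset.mem_range.2 (Nat.mod_lt _ ha0)
      · rw [Finset.card_range, Finset.card_image_of_injOn, hcard]
        intro x hx y hy h
        by_contra hne
        exact hadj x hx y hy hne h
    have hex : ∀ i : Fin a, ∃ x, x ∈ s ∧ x.val % a = i.val := by
      intro i
      have : i.val ∈ s.image (fun x : Fin n => x.val % a) := by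
        rw [himg]; exact Finset.mem_range.2 i.isLt
      simpa using this
    choose c hcs hcr using hex
    have hcinj : Function.Injective c := by
      intro i j h
      apply Fin.ext
      rw [← hcr i, ← hcr j, h]
    have himc : Ψ c = s := by
      apply Finset.eq_of_subset_of_card_le
      · intro x hx
        simp only [hΨdef, Finset.mem_image] at hx
        obtain ⟨i, _, rfl⟩ := hx
        exact hcs i
      · rw [Finset.card_image_of_injective _ hcinj, Finset.card_univ, Fintype.card_fin, hcard]
    have hz : c ⟨0, ha0⟩ ∈ s := hcs _
    have hzr : (c ⟨0, ha0⟩).val % a = 0 := hcr _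
    by_cases h0 : (c ⟨0, ha0⟩).val = 0
    · left
      refine ⟨c, fun i => ⟨hcr i, ?_, ?_⟩, himc⟩
      · intro hi0
        have : i = ⟨0, ha0⟩ := Fin.ext hi0
        rw [this]; exact h0
      · intro hi0
        have hne : c i ≠ c ⟨0, ha0⟩ := by
          intro h
          apply hi0
          rw [← hcr i, h, hzr]
        by_contra hlt
        push_neg at hlt
        exact hind (hcs i) hz hne ⟨hne, Or.inr (Or.inr ⟨h0, by omega⟩)⟩
    · right
      refine ⟨c, fun i => ⟨hcr i, ?_⟩, himc⟩
      intro hi0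
      have : i = ⟨0, ha0⟩ := Fin.ext hi0
      rw [this]
      have hdvd : a ∣ (c ⟨0, ha0⟩).val := Nat.dvd_of_mod_eq_zero hzr
      exact Nat.le_of_dvd (Nat.pos_of_ne_zero h0) hdvd
  -- Step 2: counting C0
  have hC0 : C0.ncard = tFun n a := by
    have e0 : C0.ncard = ∏ i : Fin a, Nat.card {x : Fin n //
        x.val % a = i.val ∧ (i.val = 0 → x.val = 0) ∧ (i.val ≠ 0 → a ≤ x.val)} := by
      rw [← Nat.card_coe_set_eq, ← Nat.card_pi]
      exact Nat.card_congr (Equiv.subtypePiEquivPi (p := fun (i : Fin a) (x : Fin n) =>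
          x.val % a = i.val ∧ (i.val = 0 → x.val = 0) ∧ (i.val ≠ 0 → a ≤ x.val)))
    rw [e0]
    have hfac : ∀ i : Fin a, Nat.card {x : Fin n //
        x.val % a = i.val ∧ (i.val = 0 → x.val = 0) ∧ (i.val ≠ 0 → a ≤ x.val)}
        = if (i:ℕ) = 0 then 1 else (n/a + if (i:ℕ) < n%a then 1 else 0) - 1 := by
      intro i
      rw [Nat.card_eq_fintype_card, Fintype.card_subtype]
      by_cases hi0 : (i:ℕ) = 0
      · rw [if_pos hi0]
        have : Finset.univ.filter (fun x : Fin n =>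
            x.val % a = i.val ∧ (i.val = 0 → x.val = 0) ∧ (i.val ≠ 0 → a ≤ x.val))
            = {(⟨0, by omega⟩ : Fin n)} := by
          ext x
          simp only [Finset.mem_filter, Finset.mem_univ, true_and, Finset.mem_singleton,
            Fin.ext_iff]
          constructor
          · rintro ⟨-, h2, -⟩; exact h2 hi0
          · intro h
            refine ⟨?_, fun _ => h, fun hc => absurd hi0 hc⟩
            rw [h, hi0, Nat.zero_mod]
        rw [this, Finset.card_singleton]
      · rw [if_neg hi0]
        have : Finset.univ.filter (fun x : Fin n =>
            x.val % a = i.val ∧ (i.val = 0 → x.val = 0) ∧ (i.val ≠ 0 → a ≤ x.val))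
            = Finset.univ.filter (fun x : Fin n => x.val % a = i.val ∧ a * 1 ≤ x.val) := by
          ext x
          simp only [Finset.mem_filter, Finset.mem_univ, true_and, mul_one]
          constructor
          · rintro ⟨h1, -, h3⟩; exact ⟨h1, h3 hi0⟩
          · rintro ⟨h1, h2⟩; exact ⟨h1, fun h => absurd h hi0, fun _ => h2⟩
        rw [this, card_filter_res ha0 hn hr i.isLt (by omega)]
    rw [Finset.prod_congr rfl (fun i _ => hfac i)]
    rw [Fin.prod_univ_eq_prod_range
      (fun j => if j = 0 then 1 else (n/a + if j < n%a then 1 else 0) - 1) a]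
    rw [Finset.range_eq_Ico, Finset.prod_eq_prod_Ico_succ_bot ha0, if_pos rfl, one_mul,
      tFun]
    rw [show (0+1) = 1 from rfl]
    apply Finset.prod_congr rfl
    intro i hi
    rw [Finset.mem_Ico] at hi
    rw [if_neg (by omega)]
  -- Step 3: counting C1
  have hC1 : C1.ncard = gFun (n-1) a := by
    have e1 : C1.ncard = ∏ i : Fin a, Nat.card {x : Fin n //
        x.val % a = i.val ∧ (i.val = 0 → a ≤ x.val)} := by
      rw [← Nat.card_coe_set_eq, ← Nat.card_pi]
      exact Nat.card_congr (Equiv.subtypePiEquivPi (p := fun (i : Fin a) (x : Fin n) =>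
          x.val % a = i.val ∧ (i.val = 0 → a ≤ x.val)))
    rw [e1]
    have hfac : ∀ i : Fin a, Nat.card {x : Fin n //
        x.val % a = i.val ∧ (i.val = 0 → a ≤ x.val)}
        = if (i:ℕ) = 0 then (n/a + if 0 < n%a then 1 else 0) - 1
          else (n/a + if (i:ℕ) < n%a then 1 else 0) := by
      intro i
      rw [Nat.card_eq_fintype_card, Fintype.card_subtype]
      by_cases hi0 : (i:ℕ) = 0
      · rw [if_pos hi0]
        have : Finset.univ.filter (fun x : Fin n =>
            x.val % a = i.val ∧ (i.val = 0 → a ≤ x.val))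
            = Finset.univ.filter (fun x : Fin n => x.val % a = i.val ∧ a * 1 ≤ x.val) := by
          ext x
          simp only [Finset.mem_filter, Finset.mem_univ, true_and, mul_one]
          constructor
          · rintro ⟨h1, h2⟩; exact ⟨h1, h2 hi0⟩
          · rintro ⟨h1, h2⟩; exact ⟨h1, fun _ => h2⟩
        rw [this, card_filter_res ha0 hn hr i.isLt (by omega), hi0]
      · rw [if_neg hi0]
        have : Finset.univ.filter (fun x : Fin n =>
            x.val % a = i.val ∧ (i.val = 0 → a ≤ x.val))
            = Finset.univ.filter (fun x : Fin n => x.val % a = i.val ∧ a * 0 ≤ x.val) := by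
          ext x
          simp only [Finset.mem_filter, Finset.mem_univ, true_and, mul_zero, Nat.zero_le,
            and_true]
          constructor
          · rintro ⟨h1, -⟩; exact h1
          · rintro h1; exact ⟨h1, fun h => absurd h hi0⟩
        rw [this, card_filter_res ha0 hn hr i.isLt (by omega), Nat.sub_zero]
    rw [Finset.prod_congr rfl (fun i _ => hfac i)]
    rw [Fin.prod_univ_eq_prod_range
      (fun j => if j = 0 then (n/a + if 0 < n%a then 1 else 0) - 1
        else (n/a + if j < n%a then 1 else 0)) a]
    rw [Finset.range_eq_Ico, Finset.prod_eq_prod_Ico_succ_bot ha0, if_pos rfl]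
    rw [show (0+1) = 1 from rfl]
    have : ∏ i ∈ Finset.Ico 1 a, (if i = 0 then (n/a + if 0 < n%a then 1 else 0) - 1
        else (n/a + if i < n%a then 1 else 0))
        = ∏ i ∈ Finset.Ico 1 a, (n/a + if i < n%a then 1 else 0) := by
      apply Finset.prod_congr rfl
      intro i hi
      rw [Finset.mem_Ico] at hi
      rw [if_neg (by omega)]
    rw [this, prod_ite_Ico ha0 hr, gfun_eq ha0 hn hr hq2]
  -- Conclusion
  calc Set.ncard {s : Finset (Fin n) | IsIndepFinset (Fgraph n a) s ∧ s.card = a}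
      ≤ (Ψ '' C0 ∪ Ψ '' C1).ncard := Set.ncard_le_ncard hsub (Set.toFinite _)
    _ ≤ (Ψ '' C0).ncard + (Ψ '' C1).ncard := Set.ncard_union_le _ _
    _ ≤ C0.ncard + C1.ncard :=
        add_le_add (Set.ncard_image_le (Set.toFinite _)) (Set.ncard_image_le (Set.toFinite _))
    _ = fFun n a := by rw [hC0, hC1, fFun]; omega

lemma indepNumber_eq_of {n a : ℕ} (G : SimpleGraph (Fin n))
    (hub : ∀ s, IsIndepFinset G s → s.card ≤ a)
    (hex : ∃ s, IsIndepFinset G s ∧ s.card = a) : indepNumber G = a := by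
  apply le_antisymm
  · apply csSup_le
    · exact ⟨0, ∅, fun x hx => absurd hx (Finset.notMem_empty x), Finset.card_empty⟩
    · rintro k ⟨s, hs, rfl⟩
      exact hub s hs
  · exact le_csSup ⟨a, by rintro k ⟨s, hs, rfl⟩; exact hub s hs⟩ hex


/-- **Lemma 2 (ii), case `n/α ≥ 2`.** Let `0 < α < n` with `n ≥ 2α`, and let `G'` arise from
`F(n,α)` by adding an edge `uv` between two non-adjacent vertices `u ≠ v` of `F(n,α)`.
Then `α(G') = α` and `♯α(G') < f(n,α)`. -/
theorem addEdge_Fgraph_of_two_le {n a : ℕ} (ha0 : 0 < a) (han : a < n) (h2a : 2 * a ≤ n)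
    (u v : Fin n) (huv : u ≠ v) (hnadj : ¬ (Fgraph n a).Adj u v)
    (G' : SimpleGraph (Fin n))
    (hG' : G' = Fgraph n a ⊔ SimpleGraph.fromEdgeSet {s(u, v)}) :
    indepNumber G' = a ∧ numMaxIndep G' < fFun n a := by
  classical
  -- basic consequences of non-adjacency
  have hnadj' : ¬ (u.val % a = v.val % a ∨ (u.val = 0 ∧ v.val < a) ∨
      (v.val = 0 ∧ u.val < a)) := fun h => hnadj ⟨huv, h⟩
  push_neg at hnadj'
  obtain ⟨hres, h0u, h0v⟩ := hnadj'
  have hua : u.val % a < a := Nat.mod_lt _ ha0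
  have hva : v.val % a < a := Nat.mod_lt _ ha0
  have ha2 : 2 ≤ a := by omega
  -- F-independence of G'-independent sets
  have hFle : ∀ s : Finset (Fin n), IsIndepFinset G' s → IsIndepFinset (Fgraph n a) s := by
    intro s hs x hx y hy hne hadj
    exact hs hx hy hne (by rw [hG']; exact SimpleGraph.sup_adj _ _ _ _ |>.2 (Or.inl hadj))
  -- upper bound on independent sets of F
  have hub : ∀ s : Finset (Fin n), IsIndepFinset (Fgraph n a) s → s.card ≤ a := by
    intro s hs
    have : s.card = (s.image (fun x : Fin n => x.val % a)).card := by
      rw [Finset.card_image_of_injOn]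
      intro x hx y hy h
      by_contra hne
      exact hs hx hy hne ⟨hne, Or.inl h⟩
    rw [this]
    have hsub : s.image (fun x : Fin n => x.val % a) ⊆ Finset.range a := by
      intro j hj
      simp only [Finset.mem_image] at hj
      obtain ⟨x, _, rfl⟩ := hj
      exact Finset.mem_range.2 (Nat.mod_lt _ ha0)
    calc _ ≤ (Finset.range a).card := Finset.card_le_card hsub
      _ = a := Finset.card_range a
  have hubG' : ∀ s : Finset (Fin n), IsIndepFinset G' s → s.card ≤ a :=
    fun s hs => hub s (hFle s hs)
  -- G' adjacency of u v
  have hG'uv : G'.Adj u v := by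
    rw [hG']
    exact SimpleGraph.sup_adj _ _ _ _ |>.2 (Or.inr ((SimpleGraph.fromEdgeSet_adj _).2
      ⟨Set.mem_singleton _, huv⟩))
  -- the vertex among u, v with nonzero residue
  set w : Fin n := if u.val % a = 0 then v else u with hwdef
  have hwres : w.val % a ≠ 0 := by
    rw [hwdef]
    split_ifs with h
    · omega
    · exact h
  have hwuv : w = u ∨ w = v := by
    rw [hwdef]; split_ifs <;> simp
  -- construction of an independent set of size a in G'
  have hexG' : ∃ s : Finset (Fin n), IsIndepFinset G' s ∧ s.card = a := by
    set f : Fin a → Fin n := fun i =>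
      (⟨if i.val = 0 ∨ w.val = i.val then a + i.val else i.val,
        by have := i.isLt; split_ifs <;> omega⟩ : Fin n) with hfdef
    have hfres : ∀ i, (f i).val % a = i.val := by
      intro i
      have := i.isLt
      simp only [hfdef]
      split_ifs
      · rw [Nat.add_mod_left, Nat.mod_eq_of_lt this]
      · exact Nat.mod_eq_of_lt this
    have hfnz : ∀ i, (f i).val ≠ 0 := by
      intro i
      simp only [hfdef]
      split_ifs with h
      · omega
      · push_neg at h; exact h.1
    have hfinj : Function.Injective f := by
      intro i j h
      apply Fin.ext
      rw [← hfres i, ← hfres j, h]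
    have hwnot : ∀ i, f i ≠ w := by
      intro i h
      have h3 : (if i.val = 0 ∨ w.val = i.val then a + i.val else i.val) = w.val := by
        have h4 : (f i).val = w.val := congrArg Fin.val h
        simpa only [hfdef] using h4
      split_ifs at h3 with hc
      · rcases hc with hc | hc
        · apply hwres
          rw [← h3, hc, Nat.add_zero, Nat.mod_self]
        · omega
      · push_neg at hc
        exact hc.2 h3.symm
    refine ⟨Finset.image f Finset.univ, ?_, ?_⟩
    · intro x hx y hy hne hadj
      simp only [Finset.mem_image, Finset.mem_univ, true_and] at hx hy
      obtain ⟨i, rfl⟩ := hx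
      obtain ⟨j, rfl⟩ := hy
      rw [hG'] at hadj
      rcases (SimpleGraph.sup_adj _ _ _ _).1 hadj with hF | hE
      · rcases hF.2 with h | h | h
        · have : i = j := by
            apply Fin.ext
            rw [← hfres i, ← hfres j, h]
          exact hne (by rw [this])
        · exact hfnz i h.1
        · exact hfnz j h.1
      · rw [SimpleGraph.fromEdgeSet_adj] at hE
        have h2 := hE.1
        rw [Set.mem_singleton_iff, Sym2.eq_iff] at h2
        rcases hwuv with hw | hw <;> rcases h2 with ⟨h3, h4⟩ | ⟨h3, h4⟩
        · exact hwnot i (by rw [h3, hw])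
        · exact hwnot j (by rw [h4, hw])
        · exact hwnot j (by rw [h4, hw])
        · exact hwnot i (by rw [h3, hw])
    · rw [Finset.card_image_of_injective _ hfinj, Finset.card_univ, Fintype.card_fin]
  -- independence numbers
  have hαG' : indepNumber G' = a := indepNumber_eq_of G' hubG' hexG'
  -- construction of a maximum independent set of F containing both u and v
  set T : Finset (Fin a) := Finset.univ.filter
    (fun i : Fin a => i.val ≠ u.val % a ∧ i.val ≠ v.val % a) with hTdef
  set g : Fin a → Fin n := fun i => (⟨a + i.val, by have := i.isLt; omega⟩ : Fin n) with hgdef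
  set S : Finset (Fin n) := insert u (insert v (T.image g)) with hSdef
  have hgres : ∀ i, (g i).val % a = i.val := by
    intro i
    have := i.isLt
    simp only [hgdef]
    rw [Nat.add_mod_left, Nat.mod_eq_of_lt this]
  have hginj : Function.Injective g := by
    intro i j h
    apply Fin.ext
    rw [← hgres i, ← hgres j, h]
  have hgu : ∀ i ∈ T, g i ≠ u := by
    intro i hi h
    rw [hTdef, Finset.mem_filter] at hi
    exact hi.2.1 (by rw [← hgres i, h])
  have hgv : ∀ i ∈ T, g i ≠ v := by
    intro i hi h
    rw [hTdef, Finset.mem_filter] at hi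
    exact hi.2.2 (by rw [← hgres i, h])
  have hTcard : T.card = a - 2 := by
    have : T = Finset.univ \ {(⟨u.val % a, hua⟩ : Fin a), ⟨v.val % a, hva⟩} := by
      ext i
      simp only [hTdef, Finset.mem_filter, Finset.mem_univ, true_and, Finset.mem_sdiff,
        Finset.mem_insert, Finset.mem_singleton, Fin.ext_iff]
      tauto
    rw [this, Finset.card_sdiff_of_subset (Finset.subset_univ _), Finset.card_univ, Fintype.card_fin]
    rw [Finset.card_insert_of_notMem (by simp [Fin.ext_iff]; omega), Finset.card_singleton]
  have hScard : S.card = a := by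
    rw [hSdef, Finset.card_insert_of_notMem, Finset.card_insert_of_notMem,
      Finset.card_image_of_injective _ hginj, hTcard]
    · omega
    · simp only [Finset.mem_image]
      rintro ⟨i, hi, h⟩
      exact hgv i hi h
    · simp only [Finset.mem_insert, Finset.mem_image]
      rintro (h | ⟨i, hi, h⟩)
      · exact huv h
      · exact hgu i hi h
  have hSmem : ∀ x ∈ S, x = u ∨ x = v ∨ (a ≤ x.val ∧ ∃ i ∈ T, g i = x) := by
    intro x hx
    rw [hSdef] at hx
    simp only [Finset.mem_insert, Finset.mem_image] at hx
    rcases hx with h | h | ⟨i, hi, h⟩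
    · exact Or.inl h
    · exact Or.inr (Or.inl h)
    · refine Or.inr (Or.inr ⟨?_, i, hi, h⟩)
      rw [← h]
      simp [hgdef]
  have hSres : ∀ x ∈ S, ∀ y ∈ S, x ≠ y → x.val % a ≠ y.val % a := by
    intro x hx y hy hne
    rcases hSmem x hx with rfl | rfl | ⟨hax, i, hi, rfl⟩ <;>
      rcases hSmem y hy with rfl | rfl | ⟨hay, j, hj, rfl⟩
    · exact absurd rfl hne
    · exact hres
    · rw [hgres j]
      rw [hTdef, Finset.mem_filter] at hj
      exact fun h => hj.2.1 h.symm
    · exact fun h => hres h.symm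
    · exact absurd rfl hne
    · rw [hgres j]
      rw [hTdef, Finset.mem_filter] at hj
      exact fun h => hj.2.2 h.symm
    · rw [hgres i]
      rw [hTdef, Finset.mem_filter] at hi
      exact hi.2.1
    · rw [hgres i]
      rw [hTdef, Finset.mem_filter] at hi
      exact hi.2.2
    · rw [hgres i, hgres j]
      intro h
      exact hne (congrArg g (Fin.ext h))
  have hSzero : ∀ x ∈ S, x.val = 0 → ∀ y ∈ S, x ≠ y → ¬ y.val < a := by
    intro x hx hx0 y hy hne hya
    rcases hSmem x hx with rfl | rfl | ⟨hax, i, hi, rfl⟩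
    · rcases hSmem y hy with rfl | rfl | ⟨hay, j, hj, rfl⟩
      · exact hne rfl
      · have := h0u hx0; omega
      · omega
    · rcases hSmem y hy with rfl | rfl | ⟨hay, j, hj, rfl⟩
      · have := h0v hx0; omega
      · exact hne rfl
      · omega
    · omega
  have hSind : IsIndepFinset (Fgraph n a) S := by
    intro x hx y hy hne hadj
    rcases hadj.2 with h | h | h
    · exact hSres x hx y hy hne h
    · exact hSzero x hx h.1 y hy hne h.2
    · exact hSzero y hy h.1 x hx (Ne.symm hne) h.2
  have huS : u ∈ S := by rw [hSdef]; simp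
  have hvS : v ∈ S := by rw [hSdef]; simp
  -- F has independence number a as well
  have hαF : indepNumber (Fgraph n a) = a := indepNumber_eq_of _ hub ⟨S, hSind, hScard⟩
  -- S is not independent in G'
  have hSnind : ¬ IsIndepFinset G' S := fun h => h huS hvS huv hG'uv
  -- conclude
  refine ⟨hαG', ?_⟩
  have hsub2 : {s : Finset (Fin n) | IsIndepFinset G' s ∧ s.card = indepNumber G'}
      ⊂ {s : Finset (Fin n) | IsIndepFinset (Fgraph n a) s ∧ s.card = a} := by
    constructor
    · rintro s ⟨h1, h2⟩
      exact ⟨hFle s h1, by rw [h2, hαG']⟩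
    · intro hcon
      have : S ∈ {s : Finset (Fin n) | IsIndepFinset G' s ∧ s.card = indepNumber G'} :=
        hcon ⟨hSind, hScard⟩
      exact hSnind this.1
  calc numMaxIndep G'
      < Set.ncard {s : Finset (Fin n) | IsIndepFinset (Fgraph n a) s ∧ s.card = a} :=
        Set.ncard_lt_ncard hsub2 (Set.toFinite _)
    _ ≤ fFun n a := countM ha0 h2a
end

section
/- Let n and α be positive integers with α < n < 2α, and let the graph G' arise from F(n,α) by adding an edge uv between two non-adjacent vertices u and v of F(n,α), both distinct from the special cutvertex x_0 of F(n,α). Then either the independence number of G' is strictly less than α, or the independence number of G' equals α and ♯α(G') < f(n,α). -/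
open Finset

lemma val_shape' {n a : ℕ} (hn2a : n < 2 * a) (x : Fin n) :
    ∃ r, r < a ∧ x.val % a = r ∧ (x.val = r ∨ x.val = a + r) := by
  have ha0 : 0 < a := by have := x.isLt; omega
  refine ⟨x.val % a, Nat.mod_lt _ ha0, rfl, ?_⟩
  have h1 := Nat.div_add_mod x.val a
  have h2 : x.val / a < 2 := Nat.div_lt_of_lt_mul (by have := x.isLt; omega)
  set q := x.val / a with hq
  set r := x.val % a with hr
  interval_cases q <;> omega

lemma indep_card_le' {n a : ℕ} (ha0 : 0 < a) {s : Finset (Fin n)}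
    (h : IsIndepFinset (Fgraph n a) s) : s.card ≤ a := by
  have : s.card ≤ (Finset.range a).card := by
    apply Finset.card_le_card_of_injOn (fun x => x.val % a)
    · intro x _; exact Finset.mem_range.2 (Nat.mod_lt _ ha0)
    · intro x hx y hy hxy
      by_contra hne
      exact h hx hy hne ⟨hne, Or.inl hxy⟩
  simpa using this

lemma residue_surj' {n a : ℕ} (ha0 : 0 < a) {s : Finset (Fin n)}
    (hs : IsIndepFinset (Fgraph n a) s) (hsc : s.card = a) :
    ∀ r, r < a → ∃ x ∈ s, x.val % a = r := by
  have himg : s.image (fun x : Fin n => x.val % a) = Finset.range a := by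
    apply Finset.eq_of_subset_of_card_le
    · intro m hm
      simp only [Finset.mem_image] at hm
      obtain ⟨x, _, rfl⟩ := hm
      exact Finset.mem_range.2 (Nat.mod_lt _ ha0)
    · rw [Finset.card_range, Finset.card_image_of_injOn, hsc]
      intro x hx y hy hxy
      by_contra hne
      exact hs hx hy hne ⟨hne, Or.inl hxy⟩
  intro r hr
  have : r ∈ s.image (fun x : Fin n => x.val % a) := by
    rw [himg]; exact Finset.mem_range.2 hr
  simpa using this

lemma zero_not_mem' {n a : ℕ} (han : a < n) (hn2a : n < 2 * a) {s : Finset (Fin n)}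
    (hs : IsIndepFinset (Fgraph n a) s) (hsc : s.card = a) :
    ∀ x ∈ s, x.val ≠ 0 := by
  have ha0 : 0 < a := by omega
  obtain ⟨y, hy, hyr⟩ := residue_surj' ha0 hs hsc (a - 1) (by omega)
  obtain ⟨r, hr, hrm, hshape⟩ := val_shape' hn2a y
  have hyval : y.val = a - 1 := by have := y.isLt; omega
  intro x hx hx0
  have hxy : x ≠ y := by
    intro h; rw [h] at hx0; omega
  exact hs hx hy hxy ⟨hxy, Or.inr (Or.inl ⟨hx0, by omega⟩)⟩

lemma subset_of_filter_eq' {n a : ℕ} (han : a < n) (hn2a : n < 2 * a) {s t : Finset (Fin n)}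
    (hs : IsIndepFinset (Fgraph n a) s) (hsc : s.card = a)
    (ht : IsIndepFinset (Fgraph n a) t) (htc : t.card = a)
    (hft : s.filter (fun x => a + 1 ≤ x.val) = t.filter (fun x => a + 1 ≤ x.val)) :
    s ⊆ t := by
  have ha0 : 0 < a := by omega
  intro x hx
  by_cases hxa : a + 1 ≤ x.val
  · have hmem : x ∈ s.filter (fun x => a + 1 ≤ x.val) := Finset.mem_filter.2 ⟨hx, hxa⟩
    rw [hft] at hmem
    exact (Finset.mem_filter.1 hmem).1
  · push_neg at hxa
    have hx0 : x.val ≠ 0 := zero_not_mem' han hn2a hs hsc x hx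
    obtain ⟨y, hy, hyr⟩ := residue_surj' ha0 ht htc (x.val % a) (Nat.mod_lt _ ha0)
    have hy0 : y.val ≠ 0 := zero_not_mem' han hn2a ht htc y hy
    by_cases hya : a + 1 ≤ y.val
    · have hys : y ∈ s := by
        have hmem : y ∈ t.filter (fun x => a + 1 ≤ x.val) := Finset.mem_filter.2 ⟨hy, hya⟩
        rw [← hft] at hmem
        exact (Finset.mem_filter.1 hmem).1
      have hne : x ≠ y := by intro h; rw [h] at hxa; omega
      exact absurd ⟨hne, Or.inl hyr.symm⟩ (hs hx hys hne)
    · push_neg at hya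
      obtain ⟨rx, hrx, hxm, hxs⟩ := val_shape' hn2a x
      obtain ⟨ry, hry, hym, hys⟩ := val_shape' hn2a y
      have hxyv : y.val = x.val := by
        have hre : ry = rx := by rw [← hym, ← hxm]; exact hyr
        rcases hxs with h1 | h1 <;> rcases hys with h2 | h2 <;> omega
      have : y = x := Fin.ext hxyv
      rwa [← this]


/-- **Lemma 2 (ii), case `n/α < 2`.** Let `α < n < 2α`, and let `G'` arise from `F(n,α)` by
adding an edge `uv` between two non-adjacent vertices `u ≠ v` of `F(n,α)`, both distinct
from the special cutvertex `x₀ = 0` of `F(n,α)`. Then either `α(G') < α`, or `α(G') = α`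
and `♯α(G') < f(n,α)`. -/
theorem addEdge_Fgraph_of_lt_two {n a : ℕ} (ha0 : 0 < a) (han : a < n) (hn2a : n < 2 * a)
    (u v : Fin n) (huv : u ≠ v) (hnadj : ¬ (Fgraph n a).Adj u v)
    (hu : u.val ≠ 0) (hv : v.val ≠ 0)
    (G' : SimpleGraph (Fin n))
    (hG' : G' = Fgraph n a ⊔ SimpleGraph.fromEdgeSet {s(u, v)}) :
    indepNumber G' < a ∨ (indepNumber G' = a ∧ numMaxIndep G' < fFun n a) := by
  have hn0 : 0 < n := by omega
  -- monotonicity: G'-independent implies F-independent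
  have hmono : ∀ s : Finset (Fin n), IsIndepFinset G' s → IsIndepFinset (Fgraph n a) s := by
    intro s hs x hx y hy hne hadj
    refine hs hx hy hne ?_
    rw [hG']
    exact (SimpleGraph.sup_adj _ _ _ _).2 (Or.inl hadj)
  -- upper bound on independence number
  have hle : indepNumber G' ≤ a := by
    have hzero : (0 : ℕ) ∈ {k | ∃ s : Finset (Fin n), IsIndepFinset G' s ∧ s.card = k} :=
      ⟨∅, fun x hx => absurd hx (Finset.notMem_empty x), Finset.card_empty⟩
    apply csSup_le ⟨0, hzero⟩
    rintro k ⟨s, hs, rfl⟩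
    exact indep_card_le' ha0 (hmono s hs)
  rcases lt_or_eq_of_le hle with hlt | heq
  · exact Or.inl hlt
  · right
    refine ⟨heq, ?_⟩
    -- the set of maximum independent sets of F
    set T : Set (Finset (Fin n)) := {s | IsIndepFinset (Fgraph n a) s ∧ s.card = a} with hT
    set S : Set (Finset (Fin n)) :=
      {s | IsIndepFinset G' s ∧ s.card = indepNumber G'} with hS
    have hsub : S ⊆ T := by
      rintro s ⟨h1, h2⟩
      exact ⟨hmono s h1, by rw [h2, heq]⟩
    -- residues of u and v differ
    have hres : u.val % a ≠ v.val % a := fun hh => hnadj ⟨huv, Or.inl hh⟩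
    -- witness: a maximum independent set of F containing both u and v
    set w : ℕ → ℕ := fun i =>
      if i = u.val % a then u.val else if i = v.val % a then v.val
      else if i = 0 then a else i with hw
    set g : ℕ → Fin n := fun i => (⟨w i % n, Nat.mod_lt _ hn0⟩ : Fin n) with hg
    have hwlt : ∀ i, i < a → w i < n := by
      intro i hi
      have h1 := u.isLt; have h2 := v.isLt
      simp only [hw]
      split_ifs <;> omega
    have hgval : ∀ i, i < a → (g i).val = w i := by
      intro i hi
      simp only [hg]
      exact Nat.mod_eq_of_lt (hwlt i hi)
    have hwmod : ∀ i, i < a → w i % a = i := by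
      intro i hi
      simp only [hw]
      split_ifs with h1 h2 h3
      · omega
      · omega
      · simp [h3, Nat.mod_self]
      · exact Nat.mod_eq_of_lt hi
    have hwne0 : ∀ i, i < a → w i ≠ 0 := by
      intro i hi
      simp only [hw]
      split_ifs <;> omega
    set s₀ : Finset (Fin n) := (Finset.range a).image g with hs₀
    have hmem_res : ∀ x ∈ s₀, x.val % a < a ∧ x.val % a ∈ Finset.range a ∧
        x = g (x.val % a) := by
      intro x hx
      simp only [hs₀, Finset.mem_image] at hx
      obtain ⟨i, hi, rfl⟩ := hx
      rw [Finset.mem_range] at hi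
      have : (g i).val % a = i := by rw [hgval i hi]; exact hwmod i hi
      rw [this]
      exact ⟨hi, Finset.mem_range.2 hi, rfl⟩
    have hs₀indep : IsIndepFinset (Fgraph n a) s₀ := by
      intro x hx y hy hne hadj
      obtain ⟨hix, _, hxg⟩ := hmem_res x hx
      obtain ⟨hiy, _, hyg⟩ := hmem_res y hy
      rcases hadj.2 with h | h | h
      · apply hne
        rw [hxg, hyg, h]
      · exact hwne0 _ hix (by rw [← hgval _ hix, ← hxg]; exact h.1)
      · exact hwne0 _ hiy (by rw [← hgval _ hiy, ← hyg]; exact h.1)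
    have hs₀card : s₀.card = a := by
      rw [hs₀, Finset.card_image_of_injOn, Finset.card_range]
      intro i hi j hj hij
      simp only [Finset.coe_range, Set.mem_Iio] at hi hj
      have h1 : (g i).val % a = i := by rw [hgval i hi]; exact hwmod i hi
      have h2 : (g j).val % a = j := by rw [hgval j hj]; exact hwmod j hj
      rw [← h1, ← h2, hij]
    have hus₀ : u ∈ s₀ := by
      rw [hs₀, Finset.mem_image]
      refine ⟨u.val % a, Finset.mem_range.2 (Nat.mod_lt _ ha0), ?_⟩
      apply Fin.ext
      rw [hgval _ (Nat.mod_lt _ ha0)]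
      simp only [hw, if_pos rfl]
    have hvs₀ : v ∈ s₀ := by
      rw [hs₀, Finset.mem_image]
      refine ⟨v.val % a, Finset.mem_range.2 (Nat.mod_lt _ ha0), ?_⟩
      apply Fin.ext
      have hwv : w (v.val % a) = v.val := by
        simp only [hw]
        rw [if_neg (Ne.symm hres)]
        simp
      rw [hgval _ (Nat.mod_lt _ ha0), hwv]
    have hs₀T : s₀ ∈ T := ⟨hs₀indep, hs₀card⟩
    have hG'uv : G'.Adj u v := by
      rw [hG']
      refine (SimpleGraph.sup_adj _ _ _ _).2 (Or.inr ?_)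
      rw [SimpleGraph.fromEdgeSet_adj]
      exact ⟨Set.mem_singleton _, huv⟩
    have hs₀S : s₀ ∉ S := by
      rintro ⟨hind, -⟩
      exact hind hus₀ hvs₀ huv hG'uv
    -- strict subset gives strict cardinality inequality
    have hssub : S ⊂ T := ⟨hsub, fun h => hs₀S (h hs₀T)⟩
    have hlt1 : S.ncard < T.ncard := Set.ncard_lt_ncard hssub (Set.toFinite T)
    -- bound the number of maximum independent sets of F
    set B : Finset (Fin n) := Finset.univ.filter (fun x : Fin n => a + 1 ≤ x.val) with hB
    set Φ : Finset (Fin n) → Finset (Fin n) :=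
      fun s => s.filter (fun x => a + 1 ≤ x.val) with hΦ
    have hinj : Set.InjOn Φ T := by
      rintro s ⟨hs1, hs2⟩ t ⟨ht1, ht2⟩ hst
      exact Finset.Subset.antisymm
        (subset_of_filter_eq' han hn2a hs1 hs2 ht1 ht2 hst)
        (subset_of_filter_eq' han hn2a ht1 ht2 hs1 hs2 hst.symm)
    have hBcard : B.card = n - (a + 1) := by
      have h : B.card = (Finset.Ico (a + 1) n).card := by
        apply Finset.card_bij (fun x _ => x.val)
        · intro x hx
          simp only [hB, Finset.mem_filter] at hx
          exact Finset.mem_Ico.2 ⟨hx.2, x.isLt⟩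
        · intro x _ y _ h; exact Fin.ext h
        · intro m hm
          rw [Finset.mem_Ico] at hm
          exact ⟨⟨m, hm.2⟩, by simp [hB, hm.1]; omega, rfl⟩
      rw [h, Nat.card_Ico]
    have hTbound : T.ncard ≤ 2 ^ (n - (a + 1)) := by
      calc T.ncard = (Φ '' T).ncard := (Set.ncard_image_of_injOn hinj).symm
        _ ≤ (↑B.powerset : Set (Finset (Fin n))).ncard := by
            apply Set.ncard_le_ncard _ (Set.toFinite _)
            rintro _ ⟨s, _, rfl⟩
            simp only [Finset.coe_powerset, Set.mem_preimage, Set.mem_powerset_iff,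
              Finset.coe_subset]
            intro x hx
            simp only [hΦ, Finset.mem_filter] at hx
            simp [hB, hx.2]; omega
        _ = B.powerset.card := Set.ncard_coe_finset _
        _ = 2 ^ B.card := Finset.card_powerset B
        _ = 2 ^ (n - (a + 1)) := by rw [hBcard]
    -- bound on fFun
    have hf : 2 ^ (n - (a + 1)) ≤ fFun n a := by
      have h1 : (n - 1) / a = 1 := by
        apply Nat.div_eq_of_lt_le <;> omega
      have h2 : (n - 1) % a = n - 1 - a := by
        have := Nat.div_add_mod (n - 1) a
        rw [h1] at this; omega
      have hgf : gFun (n - 1) a = 2 ^ (n - (a + 1)) := by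
        unfold gFun
        rw [h1, h2, one_pow, one_mul]
        rcases Nat.eq_or_lt_of_le han with h | h
        · have e1 : n - 1 - a = 0 := by omega
          have e2 : n - (a + 1) = 0 := by omega
          rw [e1, e2, pow_zero, pow_zero]
        · have hceil : (n - 1 + a - 1) / a = 2 := by
            apply Nat.div_eq_of_lt_le <;> omega
          rw [hceil]
          congr 1
          omega
      calc 2 ^ (n - (a + 1)) = gFun (n - 1) a := hgf.symm
        _ ≤ fFun n a := Nat.le_add_right _ _
    have : numMaxIndep G' = S.ncard := rfl
    omega
end
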